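/- For every L with 1 ≤ L ≤ N and every spatial site i ∈ ι, the rescaled feature maps satisfy the bounded increment property |S_L i − S_{L−1} i| ≤ 1/N, regardless of the choice of the block maps F_1, …, F_N. -/

import Mathlib

lemma my_abs_tanh_le_one (x : ℝ) : |Real.tanh x| ≤ 1 := by
  rw [Real.tanh_eq_sinh_div_cosh, abs_div, abs_of_pos (Real.cosh_pos x),
    div_le_one (Real.cosh_pos x), abs_le, Real.sinh_eq, Real.cosh_eq]
  constructor <;> nlinarith [Real.exp_pos x, Real.exp_pos (-x)]

/-- bounded increment for feature maps:
With arbitrary block maps `F_L` and the dampened skip connection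
`X_L i = ReLU((1 − 1/L)·X_{L−1} i + (1/L)·tanh(F_L(X_{L−1}) i))`, the rescaled
feature maps `S_0 = 0`, `S_L i = (L/N)·X_L i` satisfy
`|S_L i − S_{L−1} i| ≤ 1/N` for all `1 ≤ L ≤ N` and every site `i`. -/
theorem facnn_bounded_increment_maps
    {ι : Type*} [Fintype ι] (N : ℕ) (hN : 1 ≤ N)
    (F : ℕ → (ι → ℝ) → (ι → ℝ))
    (X : ℕ → ι → ℝ) (S : ℕ → ι → ℝ)
    (hX : ∀ L, 1 ≤ L → L ≤ N → ∀ i : ι,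
      X L i = max 0 ((1 - 1 / (L : ℝ)) * X (L - 1) i
        + (1 / (L : ℝ)) * Real.tanh (F L (X (L - 1)) i)))
    (hS0 : ∀ i : ι, S 0 i = 0)
    (hS : ∀ L, 1 ≤ L → L ≤ N → ∀ i : ι,
      S L i = ((L : ℝ) / (N : ℝ)) * X L i) :
    ∀ L, 1 ≤ L → L ≤ N → ∀ i : ι,
      |S L i - S (L - 1) i| ≤ 1 / (N : ℝ) := by
  intro L hL1 hLN i
  have hNpos : (0:ℝ) < (N:ℝ) := by exact_mod_cast hN
  have hLpos : (0:ℝ) < (L:ℝ) := by exact_mod_cast hL1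
  set t := Real.tanh (F L (X (L - 1)) i) with ht
  have habs_t : |t| ≤ 1 := my_abs_tanh_le_one _
  set a : ℝ := ((L:ℝ) - 1) * X (L - 1) i with ha_def
  -- a ≥ 0
  have ha : 0 ≤ a := by
    rcases Nat.lt_or_ge L 2 with h2 | h2
    · interval_cases L
      simp [ha_def]
    · have h1 : 1 ≤ L - 1 := by omega
      have h2' : L - 1 ≤ N := by omega
      have := hX (L - 1) h1 h2' i
      have hXnn : 0 ≤ X (L - 1) i := this ▸ le_max_left _ _
      have : (1:ℝ) ≤ (L:ℝ) := by exact_mod_cast hL1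
      exact mul_nonneg (by linarith) hXnn
  -- L * X L i = max 0 (a + t)
  have hLX : (L:ℝ) * X L i = max 0 (a + t) := by
    rw [hX L hL1 hLN i, mul_max_of_nonneg _ _ hLpos.le, mul_zero]
    congr 1
    field_simp [ha_def]
    rfl
  -- S (L-1)
  have hSL1 : S (L - 1) i = ((L:ℝ) - 1) / (N:ℝ) * X (L - 1) i := by
    rcases Nat.lt_or_ge L 2 with h2 | h2
    · interval_cases L
      simp [hS0 i]
    · have h1 : 1 ≤ L - 1 := by omega
      have h2' : L - 1 ≤ N := by omega
      rw [hS (L - 1) h1 h2' i]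
      have : ((L - 1 : ℕ) : ℝ) = (L:ℝ) - 1 := by
        have : 1 ≤ L := hL1
        push_cast [Nat.cast_sub hL1]
        ring
      rw [this]
  have hdiff : S L i - S (L - 1) i = (max 0 (a + t) - a) / (N:ℝ) := by
    rw [hS L hL1 hLN i, hSL1, ha_def, ← hLX]
    field_simp
  have hkey : |max 0 (a + t) - a| ≤ 1 := by
    rcases le_or_gt 0 (a + t) with h | h
    · rw [max_eq_right h]
      simpa using habs_t
    · rw [max_eq_left h.le]
      rw [abs_le] at habs_t ⊢
      constructor <;> linarith
  rw [hdiff, abs_div, abs_of_pos hNpos]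
  gcongr
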